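/- Assume c₀ − ε < 0, ξ₀ ∈ ℝ₊ and T(√ξ₀) > 0. Then there exist z*, z** with 0 < z* < z** < 1/d such that T(z*) = T(z**) = 0, T(z) < 0 for all z ∈ [0, z*) ∪ (z**, 1/d], and T(z) > 0 for all z ∈ (z*, z**). -/

import Mathlib

set_option maxHeartbeats 1000000 in
/-- Assume `c₀ − ε < 0`, `ξ₀ ∈ ℝ₊` (i.e. `c₂² − 3·c₁·c₃ ≥ 0` and
`ξ₀ > 0`) and `T(√ξ₀) > 0`. Then there exist `z*, z**` with `0 < z* < z** < 1/d`
such that `T(z*) = T(z**) = 0`, `T(z) < 0` for all `z ∈ [0, z*) ∪ (z**, 1/d]`,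
and `T(z) > 0` for all `z ∈ (z*, z**)`. -/
theorem snod_trace_roots
    (a d k ks ε μ0 : ℝ)
    (ha : 0 < a) (hd : 0 < d) (hk : 0 < k) (hks : 0 < ks) (hε : 0 < ε) (hμ0 : 0 < μ0)
    (c3 c2 c1 c0 : ℝ)
    (hc3 : c3 = a * d ^ 2 * ks) (hc2 : c2 = 3 * a * d ^ 2 * k + a * ks)
    (hc1 : c1 = 3 * a * k - a * d ^ 2 * μ0) (hc0 : c0 = a * μ0 - d)
    (T : ℝ → ℝ)
    (hT : T = fun z => c3 * z ^ 6 - c2 * z ^ 4 + c1 * z ^ 2 + c0 - ε)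
    (hc0ε : c0 - ε < 0)
    (ξ0 : ℝ)
    (hξ0 : ξ0 = (c2 - Real.sqrt (c2 ^ 2 - 3 * c1 * c3)) / (3 * c3))
    (hdisc : c2 ^ 2 - 3 * c1 * c3 ≥ 0)
    (hξ0pos : 0 < ξ0)
    (hTξ0 : 0 < T (Real.sqrt ξ0)) :
    ∃ zs zss : ℝ, 0 < zs ∧ zs < zss ∧ zss < 1 / d ∧
      T zs = 0 ∧ T zss = 0 ∧
      (∀ z, z ∈ Set.Ico (0 : ℝ) zs ∪ Set.Ioc zss (1 / d) → T z < 0) ∧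
      (∀ z, z ∈ Set.Ioo zs zss → 0 < T z) := by
  set D : ℝ := Real.sqrt (c2 ^ 2 - 3 * c1 * c3) with hDdef
  set b : ℝ := Real.sqrt ξ0 with hbdef
  have hDnn : 0 ≤ D := Real.sqrt_nonneg _
  have hD2 : D ^ 2 = c2 ^ 2 - 3 * c1 * c3 := Real.sq_sqrt hdisc
  have hbpos : 0 < b := Real.sqrt_pos.2 hξ0pos
  have hb2 : b ^ 2 = ξ0 := Real.sq_sqrt hξ0pos.le
  clear_value D b
  have hc3pos : 0 < c3 := by rw [hc3]; positivity
  have hc2pos : 0 < c2 := by rw [hc2]; positivity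
  have h3c3 : (0:ℝ) < 3 * c3 := by linarith
  have hξ0' : ξ0 * (3 * c3) = c2 - D := by
    rw [hξ0]; field_simp
  have hDlec2 : D < c2 := by linarith [hξ0', mul_pos hξ0pos h3c3]
  set ξ1 : ℝ := (c2 + D) / (3 * c3) with hξ1def
  clear_value ξ1
  have hξ1' : ξ1 * (3 * c3) = c2 + D := by rw [hξ1def]; field_simp
  have hξ1pos : 0 < ξ1 := by rw [hξ1def]; exact div_pos (by linarith) h3c3
  set b1 : ℝ := Real.sqrt ξ1 with hb1def
  have hb1sq : b1 ^ 2 = ξ1 := Real.sq_sqrt hξ1pos.le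
  have hb1pos : 0 < b1 := Real.sqrt_pos.2 hξ1pos
  clear_value b1
  have hξ01 : ξ0 ≤ ξ1 :=
    (mul_le_mul_iff_of_pos_right h3c3).1 (by rw [hξ0', hξ1']; linarith)
  -- key inequality : ξ0 < (1/d)^2
  have h4 : c2 * ξ0 * (3 * c3) = c2 ^ 2 - c2 * D := by linear_combination c2 * hξ0'
  have key : (c2 * ξ0) * (3 * c3) ≤ c1 * (3 * c3) := by
    have hDD : 0 ≤ D * (c2 - D) := mul_nonneg hDnn (sub_nonneg.2 hDlec2.le)
    nlinarith [h4, hD2, hDD]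
  have step1 : c2 * ξ0 ≤ c1 := (mul_le_mul_iff_of_pos_right h3c3).1 key
  have hc1d2 : c1 * d ^ 2 < c2 := by
    rw [hc1, hc2]
    nlinarith [mul_pos ha hks, mul_pos (mul_pos ha (pow_pos hd 4)) hμ0]
  have hξ0lt : ξ0 < (1 / d) ^ 2 := by
    rw [div_pow, one_pow, lt_div_iff₀ (by positivity : (0:ℝ) < d ^ 2)]
    have h5 : c2 * (ξ0 * d ^ 2) ≤ c1 * d ^ 2 := by
      calc c2 * (ξ0 * d ^ 2) = (c2 * ξ0) * d ^ 2 := by ring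
        _ ≤ c1 * d ^ 2 := mul_le_mul_of_nonneg_right step1 (sq_nonneg d)
    have h6 : c2 * (ξ0 * d ^ 2) < c2 * 1 := by rw [mul_one]; linarith
    exact lt_of_mul_lt_mul_left h6 hc2pos.le
  have hb1d : b < 1 / d := lt_of_pow_lt_pow_left₀ 2 (by positivity) (by rw [hb2]; exact hξ0lt)
  -- continuity and derivative
  have hcont : Continuous T := by rw [hT]; fun_prop
  have hsum : 3 * c3 * (ξ0 + ξ1) = 2 * c2 := by linarith [hξ0', hξ1']
  have hprod : 3 * c3 * (ξ0 * ξ1) = c1 := by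
    have h9 : (3 * c3 * (ξ0 * ξ1)) * (3 * c3) = c1 * (3 * c3) := by
      linear_combination (ξ1 * (3 * c3)) * hξ0' + (c2 - D) * hξ1' - hD2
    exact mul_right_cancel₀ (ne_of_gt h3c3) h9
  have hderiv : ∀ z : ℝ, HasDerivAt T (6 * c3 * z * (z ^ 2 - ξ0) * (z ^ 2 - ξ1)) z := by
    intro z
    have p6 := hasDerivAt_pow 6 z
    have p4 := hasDerivAt_pow 4 z
    have p2 := hasDerivAt_pow 2 z
    have h1 := ((((p6.const_mul c3).sub (p4.const_mul c2)).add (p2.const_mul c1)).add_const c0).sub_const ε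
    rw [hT]
    refine h1.congr_deriv ?_
    push_cast
    linear_combination (2 * z ^ 3) * hsum + (-2 * z) * hprod
  have hderiv' : ∀ z : ℝ, deriv T z = 6 * c3 * z * (z ^ 2 - ξ0) * (z ^ 2 - ξ1) :=
    fun z => (hderiv z).deriv
  -- value at 1/d
  have hT1d : T (1 / d) = -d - ε := by
    subst hT hc3 hc2 hc1 hc0
    simp only
    field_simp
    ring
  have hT0 : T 0 = c0 - ε := by rw [hT]; norm_num
  -- monotone on [0, b]
  have mono1 : StrictMonoOn T (Set.Icc 0 b) := by
    apply strictMonoOn_of_deriv_pos (convex_Icc _ _) hcont.continuousOn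
    intro z hz
    rw [interior_Icc] at hz
    rw [hderiv' z]
    have hz0 : 0 < z := hz.1
    have h1 : z ^ 2 < ξ0 := by
      have := pow_lt_pow_left₀ hz.2 hz.1.le (by norm_num : (2:ℕ) ≠ 0)
      rwa [hb2] at this
    have h2 : z ^ 2 < ξ1 := lt_of_lt_of_le h1 hξ01
    have h6 : (0:ℝ) < 6 * c3 * z := by positivity
    have heq : 6 * c3 * z * (z ^ 2 - ξ0) * (z ^ 2 - ξ1)
        = (6 * c3 * z) * ((ξ0 - z ^ 2) * (ξ1 - z ^ 2)) := by ring
    rw [heq]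
    exact mul_pos h6 (mul_pos (by linarith) (by linarith))
  have hTb : 0 < T b := hTξ0
  -- D > 0 (else contradiction with T b > 0 and T (1/d) < 0)
  have hDpos : 0 < D := by
    rcases hDnn.lt_or_eq with h | h
    · exact h
    · exfalso
      have hξeq : ξ1 = ξ0 := by
        have : ξ1 * (3 * c3) = ξ0 * (3 * c3) := by rw [hξ0', hξ1', ← h]; ring
        exact mul_right_cancel₀ (ne_of_gt h3c3) this
      have mono2 : StrictMonoOn T (Set.Icc b (1 / d)) := by
        apply strictMonoOn_of_deriv_pos (convex_Icc _ _) hcont.continuousOn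
        intro z hz
        rw [interior_Icc] at hz
        rw [hderiv' z]
        have hz0 : 0 < z := lt_trans hbpos hz.1
        have h1 : ξ0 < z ^ 2 := by
          have := pow_lt_pow_left₀ hz.1 hbpos.le (by norm_num : (2:ℕ) ≠ 0)
          rwa [hb2] at this
        have h2 : ξ1 < z ^ 2 := by rw [hξeq]; exact h1
        have h6 : (0:ℝ) < 6 * c3 * z := by positivity
        have heq : 6 * c3 * z * (z ^ 2 - ξ0) * (z ^ 2 - ξ1)
            = (6 * c3 * z) * ((z ^ 2 - ξ0) * (z ^ 2 - ξ1)) := by ring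
        rw [heq]
        exact mul_pos h6 (mul_pos (by linarith) (by linarith))
      have := mono2 (Set.left_mem_Icc.2 hb1d.le) (Set.right_mem_Icc.2 hb1d.le) hb1d
      rw [hT1d] at this
      linarith
  have hξ0lt1 : ξ0 < ξ1 :=
    (mul_lt_mul_iff_of_pos_right h3c3).1 (by rw [hξ0', hξ1']; linarith)
  have hbb1 : b < b1 := by
    rw [hbdef, hb1def]
    exact Real.sqrt_lt_sqrt hξ0pos.le hξ0lt1
  set m : ℝ := min b1 (1 / d) with hmdef
  have hbm : b < m := lt_min hbb1 hb1d
  have hm1d : m ≤ 1 / d := min_le_right _ _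
  -- anti on [b, m]
  have anti : StrictAntiOn T (Set.Icc b m) := by
    apply strictAntiOn_of_deriv_neg (convex_Icc _ _) hcont.continuousOn
    intro z hz
    rw [interior_Icc] at hz
    rw [hderiv' z]
    have hz0 : 0 < z := lt_trans hbpos hz.1
    have h1 : ξ0 < z ^ 2 := by
      have := pow_lt_pow_left₀ hz.1 hbpos.le (by norm_num : (2:ℕ) ≠ 0)
      rwa [hb2] at this
    have hzb1 : z < b1 := lt_of_lt_of_le hz.2 (min_le_left _ _)
    have h2 : z ^ 2 < ξ1 := by
      have := pow_lt_pow_left₀ hzb1 hz0.le (by norm_num : (2:ℕ) ≠ 0)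
      rwa [hb1sq] at this
    have h6 : (0:ℝ) < 6 * c3 * z := by positivity
    have heq : 6 * c3 * z * (z ^ 2 - ξ0) * (z ^ 2 - ξ1)
        = -((6 * c3 * z) * ((z ^ 2 - ξ0) * (ξ1 - z ^ 2))) := by ring
    rw [heq, neg_lt_zero]
    exact mul_pos h6 (mul_pos (by linarith) (by linarith))
  -- mono on [b1, 1/d]
  have mono3 : StrictMonoOn T (Set.Icc b1 (1 / d)) := by
    apply strictMonoOn_of_deriv_pos (convex_Icc _ _) hcont.continuousOn
    intro z hz
    rw [interior_Icc] at hz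
    rw [hderiv' z]
    have hz0 : 0 < z := lt_trans hb1pos hz.1
    have h2 : ξ1 < z ^ 2 := by
      have := pow_lt_pow_left₀ hz.1 hb1pos.le (by norm_num : (2:ℕ) ≠ 0)
      rwa [hb1sq] at this
    have h1 : ξ0 < z ^ 2 := lt_of_le_of_lt hξ01 h2
    have h6 : (0:ℝ) < 6 * c3 * z := by positivity
    have heq : 6 * c3 * z * (z ^ 2 - ξ0) * (z ^ 2 - ξ1)
        = (6 * c3 * z) * ((z ^ 2 - ξ0) * (z ^ 2 - ξ1)) := by ring
    rw [heq]
    exact mul_pos h6 (mul_pos (by linarith) (by linarith))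
  -- T m < 0
  have hTm : T m < 0 := by
    rcases min_cases b1 (1 / d) with ⟨hmeq, hle⟩ | ⟨hmeq, hlt⟩
    · rw [hmdef, hmeq]
      have := mono3.monotoneOn (Set.left_mem_Icc.2 hle) (Set.right_mem_Icc.2 hle) hle
      rw [hT1d] at this
      linarith
    · rw [hmdef, hmeq, hT1d]
      linarith
  -- roots via IVT
  obtain ⟨zs, hzsm, hzs0⟩ := intermediate_value_Ioo hbpos.le hcont.continuousOn
    (show (0:ℝ) ∈ Set.Ioo (T 0) (T b) from ⟨by rw [hT0]; exact hc0ε, hTb⟩)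
  obtain ⟨zss, hzssm, hzss0⟩ := intermediate_value_Ioo' hbm.le hcont.continuousOn
    (show (0:ℝ) ∈ Set.Ioo (T m) (T b) from ⟨hTm, hTb⟩)
  refine ⟨zs, zss, hzsm.1, lt_trans hzsm.2 hzssm.1, lt_of_lt_of_le hzssm.2 hm1d,
    hzs0, hzss0, ?_, ?_⟩
  · intro z hz
    rcases hz with hz | hz
    · have := mono1 ⟨hz.1, le_trans hz.2.le hzsm.2.le⟩ ⟨hzsm.1.le, hzsm.2.le⟩ hz.2
      rw [hzs0] at this
      linarith
    · by_cases hzm : z ≤ m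
      · have := anti ⟨hzssm.1.le, hzssm.2.le⟩ ⟨(lt_trans hzssm.1 hz.1).le, hzm⟩ hz.1
        rw [hzss0] at this
        linarith
      · push_neg at hzm
        have hb1lt : b1 < 1 / d := by
          rcases min_lt_iff.1 (lt_of_lt_of_le hzm hz.2) with h | h
          · exact h
          · exact absurd h (lt_irrefl _)
        have hmb1 : m = b1 := min_eq_left hb1lt.le
        have hzgt : b1 ≤ z := by rw [← hmb1]; exact hzm.le
        have := mono3.monotoneOn ⟨hzgt, hz.2⟩ ⟨hb1lt.le, le_refl _⟩ hz.2
        rw [hT1d] at this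
        linarith
  · intro z hz
    by_cases hzb : z ≤ b
    · have := mono1 ⟨hzsm.1.le, hzsm.2.le⟩ ⟨le_trans hzsm.1.le hz.1.le, hzb⟩ hz.1
      rw [hzs0] at this
      linarith
    · push_neg at hzb
      have := anti ⟨hzb.le, le_trans hz.2.le hzssm.2.le⟩ ⟨hzssm.1.le, hzssm.2.le⟩ hz.2
      rw [hzss0] at this
      linarith
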